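/- Consider N_c campaigns with required impressions I_i > 0 and N_r targeting groups with continuous non-decreasing supply curves D_j. Suppose an optimal solution (b*, γ*) to the cost-minimization problem exists. Then for each targeting group j, all campaigns i receiving positive impressions from j (γ*_{i,j}·D_j(b*_{i,j}) > 0) have equal supply values: there exists q*_j with D_j(b*_{i,j}) = D_j(q*_j) for all such i. -/

import Mathlib

open MeasureTheory Topology intervalIntegral

lemma aux_int_pos (f : ℝ → ℝ) (hmono : Monotone f) (hcont : Continuous f)
    (p q : ℝ) (hval : f p < f q) :
    0 < ∫ u in p..q, (f u - f p) := by
  have hpq : p < q := by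
    by_contra h
    push_neg at h
    exact absurd (hmono h) (not_le.mpr hval)
  have hopen : IsOpen {u | f p < f u} := isOpen_lt continuous_const hcont
  obtain ⟨δ, hδ, hball⟩ := Metric.isOpen_iff.mp hopen q hval
  set r := max ((p+q)/2) (q - δ/2) with hr
  have hpr : p < r := lt_max_of_lt_left (by linarith)
  have hrq : r < q := max_lt (by linarith) (by linarith)
  have hfr : f p < f r := by
    apply hball
    rw [Metric.mem_ball, Real.dist_eq, abs_lt]
    constructor
    · have := le_max_right ((p+q)/2) (q-δ/2); linarith
    · linarith
  have hint : ∀ a c : ℝ, IntervalIntegrable (fun u => f u - f p) volume a c :=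
    fun a c => (hcont.sub continuous_const).intervalIntegrable a c
  have h1 : 0 ≤ ∫ u in p..r, (f u - f p) := by
    apply intervalIntegral.integral_nonneg hpr.le
    intro u hu
    exact sub_nonneg.mpr (hmono hu.1)
  have h2 : 0 < ∫ u in r..q, (f u - f p) := by
    apply intervalIntegral.intervalIntegral_pos_of_pos_on (hint r q)
    · intro x hx
      have := hmono hx.1.le
      linarith
    · exact hrq
  have h3 := intervalIntegral.integral_add_adjacent_intervals (hint p r) (hint r q)
  linarith [h3]

set_option maxHeartbeats 2000000 in
lemma aux_exchange (Nc Nr : ℕ)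
    (I : Fin Nc → ℝ)
    (D : Fin Nr → ℝ → ℝ)
    (hmono : ∀ j, Monotone (D j)) (hcont : ∀ j, Continuous (D j))
    (hnn : ∀ j b, 0 ≤ D j b)
    (A : Fin Nc → Finset (Fin Nr)) (B : Fin Nr → Finset (Fin Nc))
    (hAB : ∀ i j, i ∈ B j ↔ j ∈ A i)
    (b γ : Fin Nc → Fin Nr → ℝ)
    (hbnn : ∀ i j, 0 ≤ b i j) (hγnn : ∀ i j, 0 ≤ γ i j)
    (hfeas1 : ∀ i, I i ≤ ∑ j ∈ A i, γ i j * D j (b i j))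
    (hfeas2 : ∀ j, (∑ i ∈ B j, γ i j) ≤ 1)
    (hopt : ∀ b' γ' : Fin Nc → Fin Nr → ℝ,
      (∀ i j, 0 ≤ b' i j) → (∀ i j, 0 ≤ γ' i j) →
      (∀ i, I i ≤ ∑ j ∈ A i, γ' i j * D j (b' i j)) →
      (∀ j, (∑ i ∈ B j, γ' i j) ≤ 1) →
      (∑ i, ∑ j ∈ A i, γ i j * (D j (b i j) * b i j - ∫ u in (0:ℝ)..(b i j), D j u)) ≤
        ∑ i, ∑ j ∈ A i, γ' i j * (D j (b' i j) * b' i j - ∫ u in (0:ℝ)..(b' i j), D j u))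
    (j : Fin Nr) (m n : Fin Nc) (hm : m ∈ B j) (hn : n ∈ B j)
    (hmpos : 0 < γ m j * D j (b m j)) (hnpos : 0 < γ n j * D j (b n j))
    (hlt : D j (b m j) < D j (b n j)) : False := by
  have hmn : m ≠ n := by
    intro h
    rw [h] at hlt
    exact lt_irrefl _ hlt
  have hgm : 0 < γ m j := by nlinarith [hγnn m j, hnn j (b m j), hmpos]
  have hvm : 0 < D j (b m j) := by nlinarith [hγnn m j, hnn j (b m j), hmpos]
  have hgn : 0 < γ n j := by nlinarith [hγnn n j, hnn j (b n j), hnpos]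
  have hsum : 0 < γ m j + γ n j := by linarith
  have hps : b m j < b n j := by
    by_contra h
    push_neg at h
    exact absurd (hmono j h) (not_le.mpr hlt)
  obtain ⟨vstar, hv⟩ : ∃ x : ℝ,
      x = (γ m j * D j (b m j) + γ n j * D j (b n j)) / (γ m j + γ n j) := ⟨_, rfl⟩
  have hvm_lt : D j (b m j) < vstar := by
    rw [hv, lt_div_iff₀ hsum]; nlinarith
  have hv_le : vstar ≤ D j (b n j) := by
    rw [hv, div_le_iff₀ hsum]; nlinarith
  have hvstar : 0 < vstar := lt_trans hvm hvm_lt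
  obtain ⟨q, hqmem, hq⟩ : ∃ q ∈ Set.Icc (b m j) (b n j), D j q = vstar := by
    have := intermediate_value_Icc hps.le (hcont j).continuousOn
      (a := b m j) (b := b n j) ⟨hvm_lt.le, hv_le⟩
    obtain ⟨q, hq1, hq2⟩ := this
    exact ⟨q, hq1, hq2⟩
  have hpq : b m j < q := by
    by_contra h
    push_neg at h
    have := hmono j h
    rw [hq] at this
    exact absurd this (not_le.mpr hvm_lt)
  have hqs : q ≤ b n j := hqmem.2
  have hq0 : 0 ≤ q := le_trans (hbnn m j) hqmem.1
  have hDint : ∀ a c : ℝ, IntervalIntegrable (D j) volume a c :=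
    fun a c => (hcont j).intervalIntegrable a c
  have hK : 0 < ∫ u in (b m j)..q, (D j u - D j (b m j)) :=
    aux_int_pos (D j) (hmono j) (hcont j) (b m j) q (by rw [hq]; exact hvm_lt)
  obtain ⟨K, hKd⟩ : ∃ x : ℝ, x = ∫ u in (b m j)..q, (D j u - D j (b m j)) := ⟨_, rfl⟩
  rw [← hKd] at hK
  obtain ⟨Cp, hCp⟩ : ∃ x : ℝ,
      x = D j (b m j) * b m j - ∫ u in (0:ℝ)..(b m j), D j u := ⟨_, rfl⟩
  obtain ⟨Cq, hCq⟩ : ∃ x : ℝ, x = D j q * q - ∫ u in (0:ℝ)..q, D j u := ⟨_, rfl⟩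
  obtain ⟨Cs, hCs⟩ : ∃ x : ℝ,
      x = D j (b n j) * b n j - ∫ u in (0:ℝ)..(b n j), D j u := ⟨_, rfl⟩
  -- (a) Cq - Cp = q*(vstar - D(bm)) - K
  have hKval : K = (∫ u in (b m j)..q, D j u) - D j (b m j) * (q - b m j) := by
    rw [hKd, intervalIntegral.integral_sub (hDint _ q)
      (intervalIntegrable_const)]
    simp [intervalIntegral.integral_const]
    ring
  have hadj1 : (∫ u in (0:ℝ)..(b m j), D j u) + (∫ u in (b m j)..q, D j u)
      = ∫ u in (0:ℝ)..q, D j u :=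
    intervalIntegral.integral_add_adjacent_intervals (hDint 0 _) (hDint _ q)
  have ha : Cq - Cp = q * (vstar - D j (b m j)) - K := by
    rw [hCq, hCp, hq]
    nlinarith [hKval, hadj1]
  -- (b) Cs - Cq ≥ q*(D(bn) - vstar)
  have hintmono : (∫ u in q..(b n j), D j u) ≤ (b n j - q) * D j (b n j) := by
    have := intervalIntegral.integral_mono_on (μ := volume) hqs (hDint q _)
      (intervalIntegrable_const (c := D j (b n j)))
      (fun x hx => hmono j hx.2)
    simpa [intervalIntegral.integral_const, smul_eq_mul] using this
  have hadj2 : (∫ u in (0:ℝ)..q, D j u) + (∫ u in q..(b n j), D j u)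
      = ∫ u in (0:ℝ)..(b n j), D j u :=
    intervalIntegral.integral_add_adjacent_intervals (hDint 0 q) (hDint q _)
  have hb : q * (D j (b n j) - vstar) ≤ Cs - Cq := by
    rw [hCs, hCq, hq]
    nlinarith [hintmono, hadj2]
  -- key strict inequality
  have hid : γ m j * (vstar - D j (b m j)) = γ n j * (D j (b n j) - vstar) := by
    rw [hv]; field_simp; ring
  have key : γ m j * (Cq - Cp) + γ n j * (Cq - Cs) < 0 := by
    have h1 : γ m j * (Cq - Cp) = γ m j * (q * (vstar - D j (b m j)) - K) := by rw [ha]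
    have h2 : γ n j * (q * (D j (b n j) - vstar)) ≤ γ n j * (Cs - Cq) :=
      mul_le_mul_of_nonneg_left hb hgn.le
    have h3 : q * (γ m j * (vstar - D j (b m j))) = q * (γ n j * (D j (b n j) - vstar)) := by
      rw [hid]
    nlinarith [mul_pos hgm hK]
  have hγsum : γ m j * D j (b m j) / vstar + γ n j * D j (b n j) / vstar
      = γ m j + γ n j := by
    rw [hv]; field_simp
  -- new solution
  obtain ⟨b2, hb2⟩ : ∃ f : Fin Nc → Fin Nr → ℝ,
      f = fun i' j' => if j' = j ∧ (i' = m ∨ i' = n) then q else b i' j' := ⟨_, rfl⟩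
  obtain ⟨γ2, hγ2⟩ : ∃ f : Fin Nc → Fin Nr → ℝ,
      f = fun i' j' => if j' = j ∧ i' = m then γ m j * D j (b m j) / vstar
        else if j' = j ∧ i' = n then γ n j * D j (b n j) / vstar else γ i' j' := ⟨_, rfl⟩
  have hnm : ¬ n = m := fun h => hmn h.symm
  have hb2m : b2 m j = q := by simp [hb2]
  have hb2n : b2 n j = q := by simp [hb2]
  have hγ2m : γ2 m j = γ m j * D j (b m j) / vstar := by simp [hγ2]
  have hγ2n : γ2 n j = γ n j * D j (b n j) / vstar := by simp [hγ2, hnm]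
  have hb2off : ∀ i' j', ¬(j' = j ∧ (i' = m ∨ i' = n)) → b2 i' j' = b i' j' := by
    intro i' j' h
    simp only [hb2]
    rw [if_neg h]
  have hγ2off : ∀ i' j', ¬(j' = j ∧ i' = m) → ¬(j' = j ∧ i' = n) → γ2 i' j' = γ i' j' := by
    intro i' j' h1 h2
    simp only [hγ2]
    rw [if_neg h1, if_neg h2]
  have hb2nn : ∀ i' j', 0 ≤ b2 i' j' := by
    intro i' j'
    simp only [hb2]
    split
    · exact hq0
    · exact hbnn i' j'
  have hγ2nn : ∀ i' j', 0 ≤ γ2 i' j' := by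
    intro i' j'
    simp only [hγ2]
    split
    · positivity
    · split
      · have := hnn j (b n j)
        positivity
      · exact hγnn i' j'
  have hprod : ∀ i' j', γ2 i' j' * D j' (b2 i' j') = γ i' j' * D j' (b i' j') := by
    intro i' j'
    by_cases hj : j' = j
    · by_cases him : i' = m
      · rw [hj, him, hb2m, hγ2m, hq, div_mul_cancel₀ _ hvstar.ne']
      · by_cases hin : i' = n
        · rw [hj, hin, hb2n, hγ2n, hq, div_mul_cancel₀ _ hvstar.ne']
        · rw [hb2off i' j' (fun h => h.2.elim him hin),
            hγ2off i' j' (fun h => him h.2) (fun h => hin h.2)]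
    · rw [hb2off i' j' (fun h => hj h.1),
        hγ2off i' j' (fun h => hj h.1) (fun h => hj h.1)]
  have hfeas1' : ∀ i, I i ≤ ∑ j' ∈ A i, γ2 i j' * D j' (b2 i j') := by
    intro i
    rw [Finset.sum_congr rfl (fun j' _ => hprod i j')]
    exact hfeas1 i
  have hsubmn : ({m, n} : Finset (Fin Nc)) ⊆ B j := by
    intro x hx
    rcases Finset.mem_insert.mp hx with h | h
    · rw [h]; exact hm
    · rw [Finset.mem_singleton.mp h]; exact hn
  have hfeas2' : ∀ j', (∑ i ∈ B j', γ2 i j') ≤ 1 := by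
    intro j'
    by_cases hj : j' = j
    · rw [hj]
      have hpair : ∑ x ∈ ({m, n} : Finset (Fin Nc)), (γ2 x j - γ x j)
          = ∑ i ∈ B j, (γ2 i j - γ i j) := by
        apply Finset.sum_subset hsubmn
        intro x _ hx
        have hxm : x ≠ m := by rintro rfl; exact hx (by simp)
        have hxn : x ≠ n := by rintro rfl; exact hx (by simp)
        rw [hγ2off x j (fun h => hxm h.2) (fun h => hxn h.2)]
        ring
      have hdiff : ∑ i ∈ B j, (γ2 i j - γ i j) = 0 := by
        rw [← hpair, Finset.sum_pair hmn, hγ2m, hγ2n]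
        linarith
      rw [Finset.sum_sub_distrib] at hdiff
      have := hfeas2 j
      linarith
    · have heq : ∑ i ∈ B j', γ2 i j' = ∑ i ∈ B j', γ i j' := by
        apply Finset.sum_congr rfl
        intro x _
        rw [hγ2off x j' (fun h => hj h.1) (fun h => hj h.1)]
      rw [heq]
      exact hfeas2 j'
  have hcost := hopt b2 γ2 hb2nn hγ2nn hfeas1' hfeas2'
  obtain ⟨F, hF⟩ : ∃ f : Fin Nc → ℝ, ∀ i, f i =
      ∑ j' ∈ A i, (γ2 i j' * (D j' (b2 i j') * b2 i j' - ∫ u in (0:ℝ)..(b2 i j'), D j' u)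
        - γ i j' * (D j' (b i j') * b i j' - ∫ u in (0:ℝ)..(b i j'), D j' u)) :=
    ⟨_, fun i => rfl⟩
  have hjA : ∀ i ∈ B j, j ∈ A i := fun i hi => (hAB i j).mp hi
  have hFm : F m = γ m j * D j (b m j) / vstar * Cq - γ m j * Cp := by
    have hsing : ∑ j' ∈ ({j} : Finset (Fin Nr)),
        (γ2 m j' * (D j' (b2 m j') * b2 m j' - ∫ u in (0:ℝ)..(b2 m j'), D j' u)
          - γ m j' * (D j' (b m j') * b m j' - ∫ u in (0:ℝ)..(b m j'), D j' u)) = F m := by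
      rw [hF m]
      apply Finset.sum_subset (Finset.singleton_subset_iff.mpr (hjA m hm))
      intro x _ hx
      have hxj : x ≠ j := by simpa using hx
      rw [hb2off m x (fun h => hxj h.1),
        hγ2off m x (fun h => hxj h.1) (fun h => hxj h.1)]
      ring
    rw [← hsing, Finset.sum_singleton, hb2m, hγ2m, hq, hCq, hCp, hq]
  have hFn : F n = γ n j * D j (b n j) / vstar * Cq - γ n j * Cs := by
    have hsing : ∑ j' ∈ ({j} : Finset (Fin Nr)),
        (γ2 n j' * (D j' (b2 n j') * b2 n j' - ∫ u in (0:ℝ)..(b2 n j'), D j' u)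
          - γ n j' * (D j' (b n j') * b n j' - ∫ u in (0:ℝ)..(b n j'), D j' u)) = F n := by
      rw [hF n]
      apply Finset.sum_subset (Finset.singleton_subset_iff.mpr (hjA n hn))
      intro x _ hx
      have hxj : x ≠ j := by simpa using hx
      rw [hb2off n x (fun h => hxj h.1),
        hγ2off n x (fun h => hxj h.1) (fun h => hxj h.1)]
      ring
    rw [← hsing, Finset.sum_singleton, hb2n, hγ2n, hq, hCq, hCs, hq]
  have hFother : ∀ i ∈ Finset.univ, i ∉ ({m, n} : Finset (Fin Nc)) → F i = 0 := by
    intro i _ hi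
    have him : i ≠ m := by rintro rfl; exact hi (by simp)
    have hin : i ≠ n := by rintro rfl; exact hi (by simp)
    rw [hF i]
    apply Finset.sum_eq_zero
    intro x _
    rw [hb2off i x (fun h => h.2.elim him hin),
      hγ2off i x (fun h => him h.2) (fun h => hin h.2)]
    ring
  have hFsum : ∑ i, F i = F m + F n := by
    have hpair : ∑ i ∈ ({m, n} : Finset (Fin Nc)), F i = ∑ i, F i :=
      Finset.sum_subset (Finset.subset_univ _) hFother
    rw [← hpair]
    exact Finset.sum_pair hmn
  have hδcost :
      (∑ i, ∑ j' ∈ A i, γ2 i j' * (D j' (b2 i j') * b2 i j' - ∫ u in (0:ℝ)..(b2 i j'), D j' u))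
      - (∑ i, ∑ j' ∈ A i, γ i j' * (D j' (b i j') * b i j' - ∫ u in (0:ℝ)..(b i j'), D j' u))
      = ∑ i, F i := by
    rw [← Finset.sum_sub_distrib]
    apply Finset.sum_congr rfl
    intro i _
    rw [hF i, ← Finset.sum_sub_distrib]
  have hΔneg : F m + F n < 0 := by
    rw [hFm, hFn]
    have hexp : γ m j * D j (b m j) / vstar * Cq + γ n j * D j (b n j) / vstar * Cq
        = (γ m j + γ n j) * Cq := by
      rw [← hγsum]; ring
    nlinarith [key]
  rw [hFsum] at hδcost
  linarith

/-- In an optimal solution of the multi-campaign cost-minimization problem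
with continuous non-decreasing supply curves, for each targeting group `j`, all campaigns
receiving positive impressions from `j` attain the same supply value: there is a bid
`q*_j` with `D_j (b*_{i,j}) = D_j q*_j` for every such campaign `i`. -/
theorem stmt14 (Nc Nr : ℕ)
    (I : Fin Nc → ℝ) (hI : ∀ i, 0 < I i)
    (D : Fin Nr → ℝ → ℝ)
    (hmono : ∀ j, Monotone (D j)) (hcont : ∀ j, Continuous (D j))
    (hnn : ∀ j b, 0 ≤ D j b)
    (A : Fin Nc → Finset (Fin Nr)) (B : Fin Nr → Finset (Fin Nc))
    (hAB : ∀ i j, i ∈ B j ↔ j ∈ A i)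
    (b γ : Fin Nc → Fin Nr → ℝ)
    (hbnn : ∀ i j, 0 ≤ b i j) (hγnn : ∀ i j, 0 ≤ γ i j)
    (hfeas1 : ∀ i, I i ≤ ∑ j ∈ A i, γ i j * D j (b i j))
    (hfeas2 : ∀ j, (∑ i ∈ B j, γ i j) ≤ 1)
    (hopt : ∀ b' γ' : Fin Nc → Fin Nr → ℝ,
      (∀ i j, 0 ≤ b' i j) → (∀ i j, 0 ≤ γ' i j) →
      (∀ i, I i ≤ ∑ j ∈ A i, γ' i j * D j (b' i j)) →
      (∀ j, (∑ i ∈ B j, γ' i j) ≤ 1) →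
      (∑ i, ∑ j ∈ A i, γ i j * (D j (b i j) * b i j - ∫ u in (0:ℝ)..(b i j), D j u)) ≤
        ∑ i, ∑ j ∈ A i, γ' i j * (D j (b' i j) * b' i j - ∫ u in (0:ℝ)..(b' i j), D j u)) :
    ∀ j : Fin Nr, ∃ qstar : ℝ,
      ∀ i ∈ B j, 0 < γ i j * D j (b i j) → D j (b i j) = D j qstar := by
  intro j
  by_cases hA : ∃ i ∈ B j, 0 < γ i j * D j (b i j)
  · obtain ⟨i0, hi0B, hi0⟩ := hA
    refine ⟨b i0 j, ?_⟩
    intro i hiB hi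
    rcases lt_trichotomy (D j (b i j)) (D j (b i0 j)) with h | h | h
    · exact (aux_exchange Nc Nr I D hmono hcont hnn A B hAB b γ hbnn hγnn
        hfeas1 hfeas2 hopt j i i0 hiB hi0B hi hi0 h).elim
    · exact h
    · exact (aux_exchange Nc Nr I D hmono hcont hnn A B hAB b γ hbnn hγnn
        hfeas1 hfeas2 hopt j i0 i hi0B hiB hi0 hi h).elim
  · push_neg at hA
    exact ⟨0, fun i hiB hi => absurd hi (not_lt.mpr (hA i hiB))⟩
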